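/- arXiv:1612.06044 — 3 statements merged into one kernel-verified Lean document; each statement's English description precedes it below -/
import Mathlib

section
/- Let k be a natural number and let u : ℝ → ℂ be twice continuously differentiable with M := sup_{w ∈ ℝ} (1 + w²)^{-k} |u''(w)| < ∞. Then there is a constant C > 0, depending only on k, such that for all t ≥ 1, |∫_ℝ e^{-t w²} u(w) dw − √π · u(0) · t^{-1/2}| ≤ C · M · t^{-3/2}. -/
open MeasureTheory Real

private lemma gauss_poly_bound (m : ℕ) (x : ℝ) :
    (1 + x ^ 2) ^ m * Real.exp (-x ^ 2) ≤
      (2 * ((m : ℝ) + 1)) ^ m * Real.exp (-(1 / 2) * x ^ 2) := by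
  have ha : (0:ℝ) < 2 * ((m:ℝ) + 1) := by positivity
  have key : (1 + x ^ 2) ^ m ≤ (2 * ((m:ℝ) + 1)) ^ m * Real.exp ((1/2) * x ^ 2) := by
    calc (1 + x ^ 2) ^ m
        ≤ (2 * ((m:ℝ) + 1) * Real.exp (x ^ 2 / (2 * ((m:ℝ) + 1)))) ^ m := by
          apply pow_le_pow_left₀ (by positivity)
          have h := Real.add_one_le_exp (x ^ 2 / (2 * ((m:ℝ) + 1)))
          have h2 : (2 * ((m:ℝ)+1)) * (x ^ 2 / (2 * ((m:ℝ)+1)) + 1) = x ^ 2 + 2*((m:ℝ)+1) := by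
            field_simp
          nlinarith [Real.exp_pos (x ^ 2 / (2 * ((m:ℝ) + 1)))]
      _ = (2 * ((m:ℝ) + 1)) ^ m * Real.exp (x ^ 2 / (2 * ((m:ℝ) + 1))) ^ m := by
          rw [mul_pow]
      _ = (2 * ((m:ℝ) + 1)) ^ m * Real.exp ((m:ℝ) * (x ^ 2 / (2 * ((m:ℝ) + 1)))) := by
          rw [← Real.exp_nat_mul]
      _ ≤ (2 * ((m:ℝ) + 1)) ^ m * Real.exp ((1/2) * x ^ 2) := by
          have hfrac : (m:ℝ) / (2 * ((m:ℝ) + 1)) ≤ 1/2 := by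
            rw [div_le_div_iff₀ ha (by norm_num : (0:ℝ) < 2)]
            push_cast; linarith
          have : (m:ℝ) * (x ^ 2 / (2 * ((m:ℝ) + 1))) ≤ 1/2 * x ^ 2 := by
            have h1 : (m:ℝ) * (x ^ 2 / (2 * ((m:ℝ) + 1))) = ((m:ℝ)/(2*((m:ℝ)+1))) * x ^ 2 := by
              ring
            rw [h1]
            exact mul_le_mul_of_nonneg_right hfrac (sq_nonneg x)
          exact mul_le_mul_of_nonneg_left (Real.exp_le_exp.mpr this) (by positivity)
  calc (1 + x ^ 2) ^ m * Real.exp (-x ^ 2)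
      ≤ ((2 * ((m:ℝ) + 1)) ^ m * Real.exp ((1/2) * x ^ 2)) * Real.exp (-x ^ 2) := by
        exact mul_le_mul_of_nonneg_right key (Real.exp_pos _).le
    _ = (2 * ((m:ℝ) + 1)) ^ m * Real.exp (-(1 / 2) * x ^ 2) := by
        rw [mul_assoc, ← Real.exp_add]; ring_nf

private lemma integrable_poly_gauss (m : ℕ) :
    Integrable (fun x : ℝ => (1 + x ^ 2) ^ m * Real.exp (-x ^ 2)) := by
  apply Integrable.mono'
    ((integrable_exp_neg_mul_sq (by norm_num : (0:ℝ) < 1/2)).const_mul ((2 * ((m:ℝ) + 1)) ^ m))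
  · apply Continuous.aestronglyMeasurable
    fun_prop
  · filter_upwards with x
    rw [Real.norm_eq_abs, abs_of_nonneg (by positivity)]
    exact gauss_poly_bound m x

private lemma taylor2_bound {u : ℝ → ℂ} (hu : ContDiff ℝ 2 u) {k : ℕ} {M : ℝ}
    (hM : ∀ s : ℝ, ‖iteratedDeriv 2 u s‖ ≤ M * (1 + s ^ 2) ^ k) (w : ℝ) :
    ‖u w - u 0 - deriv u 0 * (w:ℂ)‖ ≤ M * (1 + w ^ 2) ^ k * w ^ 2 := by
  have hM0 : 0 ≤ M := by
    have h0 := hM 0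
    have h1 : ((1:ℝ) + 0 ^ 2) ^ k = 1 := by norm_num
    rw [h1, mul_one] at h0
    exact le_trans (norm_nonneg _) h0
  have hu' : ContDiff ℝ (1 + 1 : ℕ) u := by exact_mod_cast hu
  have hd := (contDiff_succ_iff_deriv ).mp (by exact_mod_cast hu' : ContDiff ℝ ((1:ℕ) + 1) u)
  have hdiff : Differentiable ℝ u := hd.1
  have hd2 : Differentiable ℝ (deriv u) := hd.2.2.differentiable (by simp)
  have hit : iteratedDeriv 2 u = deriv (deriv u) := by
    rw [show (2:ℕ) = 1 + 1 from rfl, iteratedDeriv_succ, iteratedDeriv_one]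
  have hM0' : 0 ≤ M * (1 + w ^ 2) ^ k := by positivity
  have habs : ∀ s ∈ Set.uIcc (0:ℝ) w, s ^ 2 ≤ w ^ 2 := by
    intro s hs
    rcases Set.mem_uIcc.mp hs with ⟨h1, h2⟩ | ⟨h1, h2⟩ <;> nlinarith
  have hbound2 : ∀ s ∈ Set.uIcc (0:ℝ) w, ‖deriv (deriv u) s‖ ≤ M * (1 + w ^ 2) ^ k := by
    intro s hs
    calc ‖deriv (deriv u) s‖ = ‖iteratedDeriv 2 u s‖ := by rw [hit]
      _ ≤ M * (1 + s ^ 2) ^ k := hM s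
      _ ≤ M * (1 + w ^ 2) ^ k := by
          apply mul_le_mul_of_nonneg_left _ hM0
          exact pow_le_pow_left₀ (by positivity) (by nlinarith [habs s hs]) k
  have step1 : ∀ s ∈ Set.uIcc (0:ℝ) w,
      ‖deriv u s - deriv u 0‖ ≤ M * (1 + w ^ 2) ^ k * |w| := by
    intro s hs
    have h := (convex_uIcc (0:ℝ) w).norm_image_sub_le_of_norm_hasDerivWithin_le
      (fun x _ => (hd2 x).hasDerivAt.hasDerivWithinAt) hbound2 Set.left_mem_uIcc hs
    have hsw : |s| ≤ |w| := by
      rw [← Real.sqrt_sq_eq_abs, ← Real.sqrt_sq_eq_abs]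
      exact Real.sqrt_le_sqrt (habs s hs)
    calc ‖deriv u s - deriv u 0‖ ≤ M * (1 + w ^ 2) ^ k * ‖s - 0‖ := h
      _ = M * (1 + w ^ 2) ^ k * |s| := by rw [sub_zero, Real.norm_eq_abs]
      _ ≤ M * (1 + w ^ 2) ^ k * |w| := mul_le_mul_of_nonneg_left hsw hM0'
  have hg : ∀ s : ℝ, HasDerivAt (fun y : ℝ => u y - u 0 - deriv u 0 * (y:ℂ))
      (deriv u s - deriv u 0) s := by
    intro s
    have h1 : HasDerivAt u (deriv u s) s := (hdiff s).hasDerivAt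
    have h2 : HasDerivAt (fun y : ℝ => deriv u 0 * (y:ℂ)) (deriv u 0) s := by
      have := (Complex.ofRealCLM.hasDerivAt (x := s)).const_mul (deriv u 0)
      simpa using this
    exact (h1.sub_const (u 0)).sub h2
  have main := (convex_uIcc (0:ℝ) w).norm_image_sub_le_of_norm_hasDerivWithin_le
    (fun x _ => (hg x).hasDerivWithinAt) step1 Set.left_mem_uIcc Set.right_mem_uIcc
  have h0 : u (0:ℝ) - u 0 - deriv u 0 * ((0:ℝ):ℂ) = 0 := by simp
  calc ‖u w - u 0 - deriv u 0 * (w:ℂ)‖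
      = ‖(u w - u 0 - deriv u 0 * (w:ℂ)) - (u (0:ℝ) - u 0 - deriv u 0 * ((0:ℝ):ℂ))‖ := by
        rw [h0, sub_zero]
    _ ≤ M * (1 + w ^ 2) ^ k * |w| * ‖w - (0:ℝ)‖ := main
    _ = M * (1 + w ^ 2) ^ k * w ^ 2 := by
        rw [sub_zero, Real.norm_eq_abs, mul_assoc, abs_mul_abs_self, ← sq]

/-- Laplace-type asymptotic lemma: if `u : ℝ → ℂ` is `C²` with
`M = sup_w (1+w²)^{-k} |u''(w)| < ∞`, then there is `C > 0` depending only on `k`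
such that for all `t ≥ 1`,
`|∫ e^{-tw²} u(w) dw − √π · u(0) · t^{-1/2}| ≤ C · M · t^{-3/2}`. -/
theorem stmt_0 (k : ℕ) :
    ∃ C : ℝ, 0 < C ∧
      ∀ (u : ℝ → ℂ) (M : ℝ),
        ContDiff ℝ 2 u →
        (∀ w : ℝ, ((1 + w ^ 2) ^ k)⁻¹ * ‖iteratedDeriv 2 u w‖ ≤ M) →
        ∀ t : ℝ, 1 ≤ t →
          ‖(∫ w : ℝ, Complex.exp (-(t : ℂ) * (w : ℂ) ^ 2) * u w) -
              ((Real.sqrt π * t ^ (-(1 : ℝ) / 2) : ℝ) : ℂ) * u 0‖ ≤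
            C * M * t ^ (-(3 : ℝ) / 2) := by
  classical
  set g0 : ℝ → ℝ := fun v => (1 + v ^ 2) ^ k * (v ^ 2 * Real.exp (-v ^ 2)) with hg0
  have hg0_cont : Continuous g0 := by rw [hg0]; fun_prop
  have hg0_nonneg : ∀ v, 0 ≤ g0 v := fun v => by rw [hg0]; positivity
  have hg0_int : Integrable g0 := by
    apply (integrable_poly_gauss (k+1)).mono' hg0_cont.aestronglyMeasurable
    filter_upwards with v
    rw [Real.norm_eq_abs, abs_of_nonneg (hg0_nonneg v), hg0]
    calc (1 + v ^ 2) ^ k * (v ^ 2 * Real.exp (-v ^ 2))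
        ≤ (1 + v ^ 2) ^ k * ((1 + v ^ 2) * Real.exp (-v ^ 2)) := by
          gcongr
          nlinarith [sq_nonneg v]
      _ = (1 + v ^ 2) ^ (k+1) * Real.exp (-v ^ 2) := by ring
  set I : ℝ := ∫ v : ℝ, g0 v with hI
  have hI_nonneg : 0 ≤ I := integral_nonneg hg0_nonneg
  refine ⟨I + 1, by positivity, ?_⟩
  intro u M hu hM t ht
  have ht0 : (0:ℝ) < t := lt_of_lt_of_le one_pos ht
  have hst : (0:ℝ) < Real.sqrt t := Real.sqrt_pos.mpr ht0
  have hM' : ∀ s : ℝ, ‖iteratedDeriv 2 u s‖ ≤ M * (1 + s ^ 2) ^ k := by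
    intro s
    have hp : (0:ℝ) < (1 + s ^ 2) ^ k := by positivity
    have h := hM s
    calc ‖iteratedDeriv 2 u s‖
        = (1 + s ^ 2) ^ k * (((1 + s ^ 2) ^ k)⁻¹ * ‖iteratedDeriv 2 u s‖) := by
          field_simp
      _ ≤ (1 + s ^ 2) ^ k * M := mul_le_mul_of_nonneg_left h hp.le
      _ = M * (1 + s ^ 2) ^ k := mul_comm _ _
  have hM0 : 0 ≤ M := by
    have h0 := hM' 0
    have h1 : ((1:ℝ) + 0 ^ 2) ^ k = 1 := by norm_num
    rw [h1, mul_one] at h0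
    exact le_trans (norm_nonneg _) h0
  have htay := fun w : ℝ => taylor2_bound hu hM' w
  -- basic facts about the exponential factor
  have hEt : ∀ w : ℝ, Complex.exp (-(t : ℂ) * (w : ℂ) ^ 2)
      = ((Real.exp (-(t * w ^ 2)) : ℝ) : ℂ) := by
    intro w
    rw [Complex.ofReal_exp]
    congr 1
    push_cast
    ring
  have hEnorm : ∀ w : ℝ, ‖Complex.exp (-(t : ℂ) * (w : ℂ) ^ 2)‖ = Real.exp (-(t * w ^ 2)) := by
    intro w
    rw [hEt w, Complex.norm_real, Real.norm_eq_abs, abs_of_pos (Real.exp_pos _)]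
  have hexp_le : ∀ w : ℝ, Real.exp (-(t * w ^ 2)) ≤ Real.exp (-w ^ 2) := by
    intro w
    apply Real.exp_le_exp.mpr
    nlinarith [sq_nonneg w]
  have hE_cont : Continuous fun w : ℝ => Complex.exp (-(t : ℂ) * (w : ℂ) ^ 2) := by
    fun_prop
  -- integrability
  have hint2 : Integrable (fun w : ℝ => Complex.exp (-(t : ℂ) * (w : ℂ) ^ 2) * u 0) := by
    apply Integrable.mono' ((integrable_poly_gauss 0).const_mul ‖u 0‖)
    · exact (hE_cont.mul continuous_const).aestronglyMeasurable
    · filter_upwards with w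
      rw [norm_mul, hEnorm]
      calc Real.exp (-(t * w ^ 2)) * ‖u 0‖ ≤ Real.exp (-w ^ 2) * ‖u 0‖ :=
            mul_le_mul_of_nonneg_right (hexp_le w) (norm_nonneg _)
        _ = ‖u 0‖ * ((1 + w ^ 2) ^ 0 * Real.exp (-w ^ 2)) := by ring
  have hint3 : Integrable (fun w : ℝ =>
      Complex.exp (-(t : ℂ) * (w : ℂ) ^ 2) * (deriv u 0 * (w:ℂ))) := by
    apply Integrable.mono' ((integrable_poly_gauss 1).const_mul ‖deriv u 0‖)
    · exact (hE_cont.mul (continuous_const.mul Complex.continuous_ofReal)).aestronglyMeasurable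
    · filter_upwards with w
      rw [norm_mul, hEnorm, norm_mul, Complex.norm_real, Real.norm_eq_abs]
      have habs : |w| ≤ 1 + w ^ 2 := by nlinarith [sq_nonneg (|w| - 1), sq_abs w]
      calc Real.exp (-(t * w ^ 2)) * (‖deriv u 0‖ * |w|)
          ≤ Real.exp (-w ^ 2) * (‖deriv u 0‖ * (1 + w ^ 2)) := by
            apply mul_le_mul (hexp_le w) _ (by positivity) (Real.exp_pos _).le
            exact mul_le_mul_of_nonneg_left habs (norm_nonneg _)
        _ = ‖deriv u 0‖ * ((1 + w ^ 2) ^ 1 * Real.exp (-w ^ 2)) := by ring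
  have hint1 : Integrable (fun w : ℝ => Complex.exp (-(t : ℂ) * (w : ℂ) ^ 2) * u w) := by
    apply Integrable.mono'
      ((integrable_poly_gauss (k+1)).const_mul (‖u 0‖ + ‖deriv u 0‖ + M))
    · exact (hE_cont.mul hu.continuous).aestronglyMeasurable
    · filter_upwards with w
      rw [norm_mul, hEnorm]
      have habs : |w| ≤ 1 + w ^ 2 := by nlinarith [sq_nonneg (|w| - 1), sq_abs w]
      have hP : (1:ℝ) ≤ (1 + w ^ 2) ^ k := one_le_pow₀ (by nlinarith [sq_nonneg w])
      have hb : ‖u w‖ ≤ (‖u 0‖ + ‖deriv u 0‖ + M) * (1 + w ^ 2) ^ (k+1) := by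
        have h2 : ‖u w‖ ≤ M * (1 + w ^ 2) ^ k * w ^ 2 + ‖u 0‖ + ‖deriv u 0‖ * |w| := by
          have hrw : u w = (u w - u 0 - deriv u 0 * (w:ℂ)) + u 0 + deriv u 0 * (w:ℂ) := by
            ring
          calc ‖u w‖ = ‖(u w - u 0 - deriv u 0 * (w:ℂ)) + u 0 + deriv u 0 * (w:ℂ)‖ := by
                rw [← hrw]
            _ ≤ ‖(u w - u 0 - deriv u 0 * (w:ℂ)) + u 0‖ + ‖deriv u 0 * (w:ℂ)‖ :=
                norm_add_le _ _
            _ ≤ ‖u w - u 0 - deriv u 0 * (w:ℂ)‖ + ‖u 0‖ + ‖deriv u 0 * (w:ℂ)‖ := by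
                gcongr
                exact norm_add_le _ _
            _ ≤ M * (1 + w ^ 2) ^ k * w ^ 2 + ‖u 0‖ + ‖deriv u 0‖ * |w| := by
                gcongr
                · exact htay w
                · rw [norm_mul, Complex.norm_real, Real.norm_eq_abs]
        have hQ1 : (1:ℝ) ≤ (1 + w ^ 2) := by nlinarith [sq_nonneg w]
        have hPQ : (1:ℝ) ≤ (1 + w ^ 2) ^ k * (1 + w ^ 2) := le_trans hP (le_mul_of_one_le_right (by positivity) hQ1)
        calc ‖u w‖ ≤ M * (1 + w ^ 2) ^ k * w ^ 2 + ‖u 0‖ + ‖deriv u 0‖ * |w| := h2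
          _ ≤ M * ((1 + w ^ 2) ^ k * (1 + w ^ 2)) + ‖u 0‖ * ((1 + w ^ 2) ^ k * (1 + w ^ 2))
              + ‖deriv u 0‖ * ((1 + w ^ 2) ^ k * (1 + w ^ 2)) := by
            gcongr ?_ + ?_ + ?_
            · nlinarith [mul_nonneg hM0 (pow_nonneg (by positivity : (0:ℝ) ≤ 1 + w ^ 2) k)]
            · exact le_mul_of_one_le_right (norm_nonneg _) hPQ
            · calc ‖deriv u 0‖ * |w| ≤ ‖deriv u 0‖ * (1 + w ^ 2) :=
                    mul_le_mul_of_nonneg_left habs (norm_nonneg _)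
                _ ≤ ‖deriv u 0‖ * ((1 + w ^ 2) ^ k * (1 + w ^ 2)) := by
                    apply mul_le_mul_of_nonneg_left _ (norm_nonneg _)
                    exact le_mul_of_one_le_left (by nlinarith [sq_nonneg w]) hP
          _ = (‖u 0‖ + ‖deriv u 0‖ + M) * (1 + w ^ 2) ^ (k+1) := by ring
      calc Real.exp (-(t * w ^ 2)) * ‖u w‖
          ≤ Real.exp (-w ^ 2) * ((‖u 0‖ + ‖deriv u 0‖ + M) * (1 + w ^ 2) ^ (k+1)) :=
            mul_le_mul (hexp_le w) hb (norm_nonneg _) (Real.exp_pos _).le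
        _ = (‖u 0‖ + ‖deriv u 0‖ + M) * ((1 + w ^ 2) ^ (k+1) * Real.exp (-w ^ 2)) := by ring
  -- rpow computations
  have h12 : t ^ (-(1:ℝ)/2) = (Real.sqrt t)⁻¹ := by
    rw [show (-(1:ℝ)/2) = -(1/2) by norm_num, Real.rpow_neg ht0.le, ← Real.sqrt_eq_rpow]
  have h32 : t ^ (-(3:ℝ)/2) = (t * Real.sqrt t)⁻¹ := by
    rw [show (-(3:ℝ)/2) = -(1 + 1/2) by norm_num, Real.rpow_neg ht0.le, Real.rpow_add ht0,
      Real.rpow_one, ← Real.sqrt_eq_rpow]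
  -- the Gaussian integral
  have hgauss : (∫ w : ℝ, Complex.exp (-(t : ℂ) * (w : ℂ) ^ 2) * u 0)
      = ((Real.sqrt π * t ^ (-(1:ℝ)/2) : ℝ) : ℂ) * u 0 := by
    simp_rw [hEt]
    rw [integral_mul_const]
    have hco : (∫ w : ℝ, ((Real.exp (-(t * w ^ 2)) : ℝ) : ℂ))
        = (((∫ w : ℝ, Real.exp (-(t * w ^ 2))) : ℝ) : ℂ) := integral_ofReal
    rw [hco]
    have hreal : (∫ w : ℝ, Real.exp (-(t * w ^ 2))) = Real.sqrt π * t ^ (-(1:ℝ)/2) := by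
      have h : (∫ w : ℝ, Real.exp (-(t * w ^ 2))) = ∫ w : ℝ, Real.exp (-t * w ^ 2) := by
        congr 1; funext w; ring_nf
      rw [h, integral_gaussian, h12, div_eq_mul_inv, Real.sqrt_mul Real.pi_pos.le,
        Real.sqrt_inv]
    rw [hreal]
  -- the odd term vanishes
  have hodd : (∫ w : ℝ, Complex.exp (-(t : ℂ) * (w : ℂ) ^ 2) * (deriv u 0 * (w:ℂ))) = 0 := by
    set f : ℝ → ℂ := fun w => Complex.exp (-(t : ℂ) * (w : ℂ) ^ 2) * (deriv u 0 * (w:ℂ))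
      with hf
    have hneg : ∀ w : ℝ, f (-w) = -f w := by
      intro w
      simp only [hf, Complex.ofReal_neg, neg_sq, mul_neg, neg_mul]
    have h1 : (∫ w : ℝ, f (-w)) = ∫ w : ℝ, f w := integral_neg_eq_self f volume
    simp_rw [hneg] at h1
    rw [integral_neg] at h1
    have h2 : (∫ w : ℝ, f w) + (∫ w : ℝ, f w) = 0 := by
      nth_rewrite 1 [← h1]; ring
    exact add_self_eq_zero.mp h2
  -- splitting
  have hsplit : (∫ w : ℝ, Complex.exp (-(t : ℂ) * (w : ℂ) ^ 2)
        * (u w - u 0 - deriv u 0 * (w:ℂ)))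
      = (∫ w : ℝ, Complex.exp (-(t : ℂ) * (w : ℂ) ^ 2) * u w)
          - ((Real.sqrt π * t ^ (-(1:ℝ)/2) : ℝ) : ℂ) * u 0 := by
    have hint12 : Integrable (fun w : ℝ => Complex.exp (-(t : ℂ) * (w : ℂ) ^ 2) * u w
        - Complex.exp (-(t : ℂ) * (w : ℂ) ^ 2) * u 0) := hint1.sub hint2
    simp_rw [mul_sub]
    rw [integral_sub hint12 hint3, integral_sub hint1 hint2, hgauss, hodd, sub_zero]
  rw [show (-(1:ℝ)/2) = (-(1:ℝ))/2 by norm_num] at hsplit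
  rw [← hsplit]
  -- the final bound
  have hsq : ∀ w : ℝ, (Real.sqrt t * w) ^ 2 = t * w ^ 2 := by
    intro w
    rw [mul_pow, Real.sq_sqrt ht0.le]
  have hGint : Integrable (fun w : ℝ => (M / t) * g0 (Real.sqrt t * w)) :=
    (hg0_int.comp_mul_left' hst.ne').const_mul (M / t)
  have hGbound : ∀ w : ℝ, ‖Complex.exp (-(t : ℂ) * (w : ℂ) ^ 2)
      * (u w - u 0 - deriv u 0 * (w:ℂ))‖ ≤ (M / t) * g0 (Real.sqrt t * w) := by
    intro w
    rw [norm_mul, hEnorm]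
    calc Real.exp (-(t * w ^ 2)) * ‖u w - u 0 - deriv u 0 * (w:ℂ)‖
        ≤ Real.exp (-(t * w ^ 2)) * (M * (1 + w ^ 2) ^ k * w ^ 2) :=
          mul_le_mul_of_nonneg_left (htay w) (Real.exp_pos _).le
      _ ≤ Real.exp (-(t * w ^ 2)) * (M * (1 + t * w ^ 2) ^ k * w ^ 2) := by
          apply mul_le_mul_of_nonneg_left _ (Real.exp_pos _).le
          apply mul_le_mul_of_nonneg_right _ (sq_nonneg w)
          apply mul_le_mul_of_nonneg_left _ hM0
          exact pow_le_pow_left₀ (by positivity) (by nlinarith [sq_nonneg w]) k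
      _ = (M / t) * ((1 + t * w ^ 2) ^ k * ((t * w ^ 2) * Real.exp (-(t * w ^ 2)))) := by
          field_simp
      _ = (M / t) * g0 (Real.sqrt t * w) := by
          rw [hg0]
          simp only [hsq w]
  have hGval : (∫ w : ℝ, (M / t) * g0 (Real.sqrt t * w)) = (M / t) * ((Real.sqrt t)⁻¹ * I) := by
    rw [MeasureTheory.integral_const_mul]
    congr 1
    rw [Measure.integral_comp_mul_left g0 (Real.sqrt t), smul_eq_mul,
      abs_of_pos (inv_pos.mpr hst), hI]
  calc ‖∫ w : ℝ, Complex.exp (-(t : ℂ) * (w : ℂ) ^ 2) * (u w - u 0 - deriv u 0 * (w:ℂ))‖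
      ≤ ∫ w : ℝ, (M / t) * g0 (Real.sqrt t * w) :=
        norm_integral_le_of_norm_le hGint (Filter.Eventually.of_forall hGbound)
    _ = (M / t) * ((Real.sqrt t)⁻¹ * I) := hGval
    _ ≤ (I + 1) * M * t ^ (-(3:ℝ)/2) := by
        rw [show (-(3:ℝ)/2) = -(3:ℝ)/2 by norm_num, h32, mul_inv]
        have e1 : M / t * ((Real.sqrt t)⁻¹ * I) = M * I * (t⁻¹ * (Real.sqrt t)⁻¹) := by
          field_simp
        rw [e1]
        have hx : 0 ≤ t⁻¹ * (Real.sqrt t)⁻¹ := by positivity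
        nlinarith [mul_nonneg hM0 hx]
end

section
/- Let k be a natural number and let u : ℝ → ℂ be four times continuously differentiable with u(0) = 0 and M₄ := sup_{w ∈ ℝ} (1 + w²)^{-k} |u''''(w)| < ∞. Then there is a constant C > 0, depending only on k, such that for all t ≥ 1, |∫_ℝ e^{-t w²} u(w) dw − (√π / 4) · u''(0) · t^{-3/2}| ≤ C · M₄ · t^{-5/2}. -/
open MeasureTheory Real Set

lemma my_taylor_bound : ∀ (n : ℕ) (f : ℝ → ℂ) (M : ℝ) (k : ℕ), 0 ≤ M →
    ContDiff ℝ n f → (∀ j, j < n → iteratedDeriv j f 0 = 0) →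
    (∀ x : ℝ, ‖iteratedDeriv n f x‖ ≤ M * (1 + x ^ 2) ^ k) →
    ∀ w : ℝ, ‖f w‖ ≤ M * (1 + w ^ 2) ^ k * |w| ^ n := by
  intro n
  induction n with
  | zero =>
    intro f M k hM hf h0 hb w
    simpa using hb w
  | succ n ih =>
    intro f M k hM hf h0 hb w
    have hf' : ContDiff ℝ ((n : WithTop ℕ∞) + 1) f := by exact_mod_cast hf
    have hdiff : Differentiable ℝ f := (contDiff_succ_iff_deriv.mp hf').1
    have hfd : ContDiff ℝ n (deriv f) := (contDiff_succ_iff_deriv.mp hf').2.2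
    have hIH : ∀ x : ℝ, ‖deriv f x‖ ≤ M * (1 + x ^ 2) ^ k * |x| ^ n := by
      refine ih (deriv f) M k hM hfd (fun j hj => ?_) (fun x => ?_)
      · rw [← iteratedDeriv_succ']
        exact h0 (j + 1) (by omega)
      · rw [← iteratedDeriv_succ']
        exact hb x
    have hxw : ∀ x ∈ uIcc (0 : ℝ) w, |x| ≤ |w| := by
      intro x hx
      rcases mem_uIcc.mp hx with ⟨h1, h2⟩ | ⟨h1, h2⟩
      · rw [abs_of_nonneg h1, abs_of_nonneg (le_trans h1 h2)]; exact h2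
      · rw [abs_of_nonpos h2, abs_of_nonpos (le_trans h1 h2)]; linarith
    have key : ‖f w - f 0‖ ≤ (M * (1 + w ^ 2) ^ k * |w| ^ n) * ‖w - 0‖ := by
      refine Convex.norm_image_sub_le_of_norm_deriv_le
        (fun x _ => hdiff x) (fun x hx => (hIH x).trans ?_) (convex_uIcc 0 w)
        left_mem_uIcc right_mem_uIcc
      have h1 : |x| ≤ |w| := hxw x hx
      have h2 : x ^ 2 ≤ w ^ 2 := by
        rw [← sq_abs x, ← sq_abs w]; exact pow_le_pow_left₀ (abs_nonneg _) h1 2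
      gcongr <;> first | positivity | linarith
    have hf0 : f 0 = 0 := by simpa using h0 0 (by omega)
    rw [hf0, sub_zero] at key
    calc ‖f w‖ ≤ M * (1 + w ^ 2) ^ k * |w| ^ n * ‖w - 0‖ := key
      _ = M * (1 + w ^ 2) ^ k * |w| ^ (n + 1) := by
          rw [sub_zero, Real.norm_eq_abs, pow_succ]; ring

lemma my_integrable_pow (n : ℕ) {t : ℝ} (ht : 0 < t) :
    Integrable fun x : ℝ => x ^ n * rexp (-t * x ^ 2) := by
  have h : (-1 : ℝ) < n := lt_of_lt_of_le neg_one_lt_zero (Nat.cast_nonneg n)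
  simpa [Real.rpow_natCast] using integrable_rpow_mul_exp_neg_mul_sq ht h

lemma my_moment_odd (m : ℕ) (t : ℝ) :
    ∫ x : ℝ, x ^ (2 * m + 1) * rexp (-t * x ^ 2) = 0 := by
  have h := integral_neg_eq_self (fun x : ℝ => x ^ (2 * m + 1) * rexp (-t * x ^ 2)) volume
  have h2 : ∫ x : ℝ, (-x) ^ (2 * m + 1) * rexp (-t * (-x) ^ 2)
      = -∫ x : ℝ, x ^ (2 * m + 1) * rexp (-t * x ^ 2) := by
    rw [← integral_neg]
    congr 1; ext x
    rw [Odd.neg_pow ⟨m, by ring⟩, neg_sq]; ring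
  rw [h2] at h
  linarith

lemma my_moment_even (m : ℕ) {t : ℝ} (ht : 0 < t) :
    ∫ x : ℝ, x ^ (2 * m) * rexp (-t * x ^ 2)
      = Real.Gamma ((2 * (m : ℝ) + 1) / 2) * t ^ (-(2 * (m : ℝ) + 1) / 2) := by
  have h1 : (∫ x : ℝ, x ^ (2 * m) * rexp (-t * x ^ 2))
      = ∫ x : ℝ, (fun y : ℝ => y ^ (2 * m) * rexp (-t * y ^ 2)) |x| := by
    congr 1; ext x
    simp only [pow_mul, sq_abs]
  rw [h1, integral_comp_abs (f := fun y : ℝ => y ^ (2 * m) * rexp (-t * y ^ 2))]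
  have h2 : (∫ x : ℝ in Ioi 0, x ^ (2 * m) * rexp (-t * x ^ 2))
      = ∫ x : ℝ in Ioi 0, x ^ ((2 * m : ℕ) : ℝ) * rexp (-t * x ^ (2 : ℝ)) := by
    refine setIntegral_congr_fun measurableSet_Ioi (fun x hx => ?_)
    rw [Real.rpow_natCast, Real.rpow_two]
  rw [h2, integral_rpow_mul_exp_neg_mul_rpow two_pos
    (lt_of_lt_of_le neg_one_lt_zero (Nat.cast_nonneg _)) ht]
  push_cast
  ring

lemma my_iteratedDeriv_sub {f g : ℝ → ℂ} {n : ℕ} (hf : ContDiff ℝ n f) (hg : ContDiff ℝ n g)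
    (x : ℝ) :
    iteratedDeriv n (fun y => f y - g y) x = iteratedDeriv n f x - iteratedDeriv n g x := by
  have h := iteratedDerivWithin_sub (Set.mem_univ x) uniqueDiffOn_univ
    hf.contDiffWithinAt hg.contDiffWithinAt
  simpa [iteratedDerivWithin_univ, Pi.sub_def] using h

/-- Laplace-type asymptotic lemma, second part: if `u : ℝ → ℂ` is `C⁴` with `u(0) = 0` and
`M₄ = sup_w (1+w²)^{-k} |u''''(w)| < ∞`, then there is `C > 0` depending only on `k`
such that for all `t ≥ 1`,
`|∫ e^{-tw²} u(w) dw − (√π/4) · u''(0) · t^{-3/2}| ≤ C · M₄ · t^{-5/2}`. -/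
theorem stmt_1 (k : ℕ) :
    ∃ C : ℝ, 0 < C ∧
      ∀ (u : ℝ → ℂ) (M₄ : ℝ),
        ContDiff ℝ 4 u →
        u 0 = 0 →
        (∀ w : ℝ, ((1 + w ^ 2) ^ k)⁻¹ * ‖iteratedDeriv 4 u w‖ ≤ M₄) →
        ∀ t : ℝ, 1 ≤ t →
          ‖(∫ w : ℝ, Complex.exp (-(t : ℂ) * (w : ℂ) ^ 2) * u w) -
              ((Real.sqrt π / 4 * t ^ (-(3 : ℝ) / 2) : ℝ) : ℂ) * iteratedDeriv 2 u 0‖ ≤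
            C * M₄ * t ^ (-(5 : ℝ) / 2) := by
  refine ⟨2 ^ k * (Real.Gamma ((2 * (2 : ℝ) + 1) / 2)
      + Real.Gamma ((2 * ((k : ℝ) + 2) + 1) / 2)), by positivity, ?_⟩
  intro u M₄ hu hu0 hM t ht
  have ht0 : (0 : ℝ) < t := lt_of_lt_of_le one_pos ht
  have hM₄ : 0 ≤ M₄ := le_trans (by positivity) (hM 0)
  set c1 := iteratedDeriv 1 u 0 with hc1
  set c2 := iteratedDeriv 2 u 0 with hc2
  set c3 := iteratedDeriv 3 u 0 with hc3
  set p : ℝ → ℂ := fun w => c1 * w + c2 / 2 * (w : ℂ) ^ 2 + c3 / 6 * (w : ℂ) ^ 3 with hp_def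
  set q1 : ℝ → ℂ := fun w => c1 + c2 * w + c3 / 2 * (w : ℂ) ^ 2 with hq1_def
  set q2 : ℝ → ℂ := fun w => c2 + c3 * w with hq2_def
  have hd : ∀ w : ℝ, HasDerivAt (fun x : ℝ => (x : ℂ)) 1 w := fun w => by
    simpa using (hasDerivAt_id w).ofReal_comp
  have Hp : ∀ w : ℝ, HasDerivAt p (q1 w) w := by
    intro w
    have ha := (hd w).const_mul c1
    have hb := ((hd w).mul (hd w)).const_mul (c2 / 2)
    have hc := (((hd w).mul (hd w)).mul (hd w)).const_mul (c3 / 6)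
    have h := (ha.add hb).add hc
    convert h using 1
    · rfl
    · funext x; simp only [hp_def, Pi.add_apply, Pi.mul_apply, Pi.pow_apply]; push_cast; ring
    · simp only [hq1_def, Pi.add_apply, Pi.mul_apply, Pi.pow_apply]; push_cast; ring
  have Hq1 : ∀ w : ℝ, HasDerivAt q1 (q2 w) w := by
    intro w
    have ha := hasDerivAt_const w c1
    have hb := (hd w).const_mul c2
    have hc := ((hd w).mul (hd w)).const_mul (c3 / 2)
    have h := (ha.add hb).add hc
    convert h using 1
    · rfl
    · funext x; simp only [hq1_def, Pi.add_apply, Pi.mul_apply, Pi.pow_apply]; push_cast; ring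
    · simp only [hq2_def, Pi.add_apply, Pi.mul_apply, Pi.pow_apply]; push_cast; ring
  have Hq2 : ∀ w : ℝ, HasDerivAt q2 c3 w := by
    intro w
    have h := (hasDerivAt_const w c2).add ((hd w).const_mul c3)
    convert h using 1
    · rfl
    · funext x; simp [hq2_def]
    simp
  have e1 : deriv p = q1 := funext fun w => (Hp w).deriv
  have e2 : deriv q1 = q2 := funext fun w => (Hq1 w).deriv
  have e3 : deriv q2 = fun _ => c3 := funext fun w => (Hq2 w).deriv
  have i1 : iteratedDeriv 1 p = q1 := by rw [iteratedDeriv_one, e1]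
  have i2 : iteratedDeriv 2 p = q2 := by
    rw [show (2:ℕ) = 1 + 1 from rfl, iteratedDeriv_succ', e1, iteratedDeriv_one, e2]
  have i3 : iteratedDeriv 3 p = fun _ => c3 := by
    rw [show (3:ℕ) = 2 + 1 from rfl, iteratedDeriv_succ', e1,
        show (2:ℕ) = 1 + 1 from rfl, iteratedDeriv_succ', e2, iteratedDeriv_one, e3]
  have i4 : iteratedDeriv 4 p = fun _ => 0 := by
    rw [show (4:ℕ) = 3 + 1 from rfl, iteratedDeriv_succ', e1,
        show (3:ℕ) = 2 + 1 from rfl, iteratedDeriv_succ', e2,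
        show (2:ℕ) = 1 + 1 from rfl, iteratedDeriv_succ', e3, iteratedDeriv_one, deriv_const']
  have hpC : ContDiff ℝ 4 p := by
    have hc : ContDiff ℝ 4 (fun x : ℝ => (x : ℂ)) := Complex.ofRealCLM.contDiff
    exact ((contDiff_const.mul hc).add (contDiff_const.mul (hc.pow 2))).add
      (contDiff_const.mul (hc.pow 3))
  set g : ℝ → ℂ := fun w => u w - p w with hg_def
  have hgC : ContDiff ℝ 4 g := hu.sub hpC
  -- vanishing of low-order derivatives of g at 0
  have hg0 : ∀ j, j < 4 → iteratedDeriv j g 0 = 0 := by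
    intro j hj
    have hsub : iteratedDeriv j g 0 = iteratedDeriv j u 0 - iteratedDeriv j p 0 := by
      refine my_iteratedDeriv_sub (hu.of_le ?_) (hpC.of_le ?_) 0 <;>
        · exact_mod_cast Nat.cast_le.mpr (by omega : j ≤ 4)
    interval_cases j
    · simpa [hu0, hp_def] using hsub
    · rw [hsub, i1]; simp [hq1_def, hc1]
    · rw [hsub, i2]; simp [hq2_def, hc2]
    · rw [hsub, i3]; simp [hc3]
  -- bound on the fourth derivative of g
  have hg4 : ∀ x : ℝ, ‖iteratedDeriv 4 g x‖ ≤ M₄ * (1 + x ^ 2) ^ k := by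
    intro x
    have hsub : iteratedDeriv 4 g x = iteratedDeriv 4 u x - iteratedDeriv 4 p x :=
      my_iteratedDeriv_sub hu hpC x
    rw [hsub, i4, sub_zero]
    have h := hM x
    have hpos : (0 : ℝ) < (1 + x ^ 2) ^ k := by positivity
    rw [inv_mul_le_iff₀ hpos] at h
    linarith [h]
  have hgb : ∀ w : ℝ, ‖g w‖ ≤ M₄ * (1 + w ^ 2) ^ k * |w| ^ 4 :=
    my_taylor_bound 4 g M₄ k hM₄ hgC hg0 hg4
  -- the Gaussian weight
  set E : ℝ → ℝ := fun w => rexp (-t * w ^ 2) with hE_def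
  have hcast : (fun w : ℝ => Complex.exp (-(t : ℂ) * (w : ℂ) ^ 2) * u w)
      = fun w : ℝ => ((E w : ℝ) : ℂ) * u w := by
    funext w
    congr 1
    rw [hE_def]
    rw [Complex.ofReal_exp]
    congr 1
    push_cast
    ring
  -- integrability of monomials against the Gaussian
  have intE : ∀ (n : ℕ) (c : ℂ), Integrable fun w : ℝ => ((E w : ℝ) : ℂ) * (c * (w : ℂ) ^ n) := by
    intro n c
    have h1 : Integrable fun w : ℝ => (((w ^ n * E w : ℝ)) : ℂ) :=
      (my_integrable_pow n ht0).ofReal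
    have heq : (fun w : ℝ => ((E w : ℝ) : ℂ) * (c * (w : ℂ) ^ n))
        = fun w : ℝ => c * (((w ^ n * E w : ℝ)) : ℂ) := by
      funext w; push_cast; ring
    rw [heq]
    exact h1.const_mul c
  have intP : Integrable fun w : ℝ => ((E w : ℝ) : ℂ) * p w := by
    have heq : (fun w : ℝ => ((E w : ℝ) : ℂ) * p w)
        = fun w : ℝ => ((E w : ℝ) : ℂ) * (c1 * (w : ℂ) ^ 1)
          + (((E w : ℝ) : ℂ) * (c2 / 2 * (w : ℂ) ^ 2)
          + ((E w : ℝ) : ℂ) * (c3 / 6 * (w : ℂ) ^ 3)) := by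
      funext w; simp only [hp_def]; push_cast; ring
    rw [heq]
    exact (intE 1 c1).add ((intE 2 (c2 / 2)).add (intE 3 (c3 / 6)))
  -- pointwise bound for the remainder integrand
  have hkey : ∀ w : ℝ, (1 + w ^ 2) ^ k * w ^ 4 ≤ 2 ^ k * (w ^ 4 + w ^ (2 * k + 4)) := by
    intro w
    have hw4 : (0 : ℝ) ≤ w ^ 4 := by positivity
    have hw2k4 : (0 : ℝ) ≤ w ^ (2 * k + 4) := by
      rw [show 2 * k + 4 = 2 * (k + 2) from by ring, pow_mul]; positivity
    have h2pk : (0 : ℝ) ≤ 2 ^ k := by positivity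
    rcases le_total (w ^ 2) 1 with h | h
    · have h1 : (1 + w ^ 2) ^ k ≤ 2 ^ k := pow_le_pow_left₀ (by positivity) (by linarith) k
      nlinarith [mul_le_mul_of_nonneg_right h1 hw4, mul_nonneg h2pk hw2k4]
    · have h1 : (1 + w ^ 2) ^ k ≤ 2 ^ k * w ^ (2 * k) := by
        calc (1 + w ^ 2) ^ k ≤ (2 * w ^ 2) ^ k :=
              pow_le_pow_left₀ (by positivity) (by linarith) k
          _ = 2 ^ k * w ^ (2 * k) := by rw [mul_pow, pow_mul]
      have h2 : w ^ (2 * k) * w ^ 4 = w ^ (2 * k + 4) := by rw [← pow_add]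
      nlinarith [mul_le_mul_of_nonneg_right h1 hw4, mul_nonneg h2pk hw4]
  have hgd : ∀ w : ℝ, ‖((E w : ℝ) : ℂ) * g w‖
      ≤ M₄ * 2 ^ k * (w ^ 4 * E w + w ^ (2 * k + 4) * E w) := by
    intro w
    have hEpos : 0 < E w := Real.exp_pos _
    have hnorm : ‖((E w : ℝ) : ℂ) * g w‖ = E w * ‖g w‖ := by
      rw [norm_mul, Complex.norm_real, Real.norm_eq_abs, abs_of_pos hEpos]
    have habs : |w| ^ 4 = w ^ 4 := by
      rw [pow_abs, abs_of_nonneg (by positivity : (0:ℝ) ≤ w ^ 4)]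
    calc ‖((E w : ℝ) : ℂ) * g w‖ = E w * ‖g w‖ := hnorm
      _ ≤ E w * (M₄ * (1 + w ^ 2) ^ k * |w| ^ 4) :=
          mul_le_mul_of_nonneg_left (hgb w) hEpos.le
      _ = M₄ * ((1 + w ^ 2) ^ k * w ^ 4) * E w := by rw [habs]; ring
      _ ≤ M₄ * (2 ^ k * (w ^ 4 + w ^ (2 * k + 4))) * E w := by
          have := hkey w
          have h0 : 0 ≤ M₄ * E w := mul_nonneg hM₄ hEpos.le
          nlinarith [mul_le_mul_of_nonneg_right (hkey w) hEpos.le]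
      _ = M₄ * 2 ^ k * (w ^ 4 * E w + w ^ (2 * k + 4) * E w) := by ring
  have intD : Integrable fun w : ℝ =>
      M₄ * 2 ^ k * (w ^ 4 * E w + w ^ (2 * k + 4) * E w) :=
    (((my_integrable_pow 4 ht0).add (my_integrable_pow (2 * k + 4) ht0)).const_mul _)
  have intG : Integrable fun w : ℝ => ((E w : ℝ) : ℂ) * g w := by
    refine Integrable.mono' intD ?_ (Filter.Eventually.of_forall hgd)
    have hEc : Continuous E :=
      Real.continuous_exp.comp (continuous_const.mul (continuous_pow 2))
    exact ((Complex.continuous_ofReal.comp hEc).mul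
      (hu.continuous.sub hpC.continuous)).aestronglyMeasurable
  -- splitting the integral
  have hsplit : (∫ w : ℝ, ((E w : ℝ) : ℂ) * u w)
      = (∫ w : ℝ, ((E w : ℝ) : ℂ) * p w) + ∫ w : ℝ, ((E w : ℝ) : ℂ) * g w := by
    rw [← integral_add intP intG]
    congr 1; funext w; simp only [hg_def]; ring
  -- computing the polynomial integral
  have hmono : ∀ (n : ℕ) (c : ℂ), (∫ w : ℝ, ((E w : ℝ) : ℂ) * (c * (w : ℂ) ^ n))
      = c * (((∫ w : ℝ, w ^ n * E w : ℝ)) : ℂ) := by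
    intro n c
    have h1 : (∫ w : ℝ, (((w ^ n * E w : ℝ)) : ℂ)) = (((∫ w : ℝ, w ^ n * E w : ℝ)) : ℂ) :=
      integral_ofReal
    calc (∫ w : ℝ, ((E w : ℝ) : ℂ) * (c * (w : ℂ) ^ n))
        = ∫ w : ℝ, c * (((w ^ n * E w : ℝ)) : ℂ) := by
          congr 1; funext w; push_cast; ring
      _ = c * ∫ w : ℝ, (((w ^ n * E w : ℝ)) : ℂ) := integral_const_mul c _
      _ = c * (((∫ w : ℝ, w ^ n * E w : ℝ)) : ℂ) := congrArg (fun z => c * z) h1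
  have m1 : (∫ w : ℝ, w ^ 1 * E w) = 0 := by
    have h2 : (∫ w : ℝ, w ^ 1 * E w) = ∫ x : ℝ, x ^ (2 * 0 + 1) * rexp (-t * x ^ 2) := by
      norm_num [hE_def]
    rw [h2, my_moment_odd 0 t]
  have m3 : (∫ w : ℝ, w ^ 3 * E w) = 0 := by
    have h2 : (∫ w : ℝ, w ^ 3 * E w) = ∫ x : ℝ, x ^ (2 * 1 + 1) * rexp (-t * x ^ 2) := by
      norm_num [hE_def]
    rw [h2, my_moment_odd 1 t]
  have m2 : (∫ w : ℝ, w ^ 2 * E w) = Real.sqrt π / 2 * t ^ (-(3 : ℝ) / 2) := by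
    have h2 : (∫ w : ℝ, w ^ 2 * E w) = ∫ x : ℝ, x ^ (2 * 1) * rexp (-t * x ^ 2) := by
      norm_num [hE_def]
    rw [h2, my_moment_even 1 ht0]
    push_cast
    rw [show (2 * (1 : ℝ) + 1) / 2 = 1 / 2 + 1 from by norm_num,
      Real.Gamma_add_one (by norm_num), Real.Gamma_one_half_eq,
      show (-(2 * (1 : ℝ) + 1) / 2) = (-(3 : ℝ) / 2) from by norm_num]
    ring
  have hIp : (∫ w : ℝ, ((E w : ℝ) : ℂ) * p w)
      = ((Real.sqrt π / 4 * t ^ (-(3 : ℝ) / 2) : ℝ) : ℂ) * c2 := by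
    have heq : (fun w : ℝ => ((E w : ℝ) : ℂ) * p w)
        = fun w : ℝ => ((E w : ℝ) : ℂ) * (c1 * (w : ℂ) ^ 1)
          + (((E w : ℝ) : ℂ) * (c2 / 2 * (w : ℂ) ^ 2)
          + ((E w : ℝ) : ℂ) * (c3 / 6 * (w : ℂ) ^ 3)) := by
      funext w; simp only [hp_def]; push_cast; ring
    have intB : Integrable (fun w : ℝ => ((E w : ℝ) : ℂ) * (c2 / 2 * (w : ℂ) ^ 2)
        + ((E w : ℝ) : ℂ) * (c3 / 6 * (w : ℂ) ^ 3)) volume :=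
      (intE 2 (c2 / 2)).add (intE 3 (c3 / 6))
    rw [heq, integral_add (intE 1 c1) intB,
      integral_add (intE 2 (c2 / 2)) (intE 3 (c3 / 6)), hmono, hmono, hmono, m1, m2, m3]
    push_cast
    ring
  -- the moments for the remainder
  have m4 : (∫ w : ℝ, w ^ 4 * E w)
      = Real.Gamma ((2 * (2 : ℝ) + 1) / 2) * t ^ (-(2 * (2 : ℝ) + 1) / 2) := by
    have h2 : (∫ w : ℝ, w ^ 4 * E w) = ∫ x : ℝ, x ^ (2 * 2) * rexp (-t * x ^ 2) := by
      norm_num [hE_def]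
    rw [h2, my_moment_even 2 ht0]
    push_cast
    ring_nf
  have mk : (∫ w : ℝ, w ^ (2 * k + 4) * E w)
      = Real.Gamma ((2 * ((k : ℝ) + 2) + 1) / 2) * t ^ (-(2 * ((k : ℝ) + 2) + 1) / 2) := by
    have h := my_moment_even (k + 2) ht0
    rw [show 2 * (k + 2) = 2 * k + 4 from by ring] at h
    have h2 : (∫ w : ℝ, w ^ (2 * k + 4) * E w)
        = ∫ x : ℝ, x ^ (2 * k + 4) * rexp (-t * x ^ 2) := by
      simp only [hE_def]
    rw [h2, h]
    push_cast
    ring_nf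
  -- final estimate
  have hGa : 0 < Real.Gamma ((2 * (2 : ℝ) + 1) / 2) := by positivity
  have hGb : 0 < Real.Gamma ((2 * ((k : ℝ) + 2) + 1) / 2) := by positivity
  have hexp4 : (-(2 * (2 : ℝ) + 1) / 2) = (-(5 : ℝ) / 2) := by norm_num
  have hexpk : t ^ (-(2 * ((k : ℝ) + 2) + 1) / 2) ≤ t ^ (-(5 : ℝ) / 2) := by
    apply rpow_le_rpow_of_exponent_le ht
    have hk : (0 : ℝ) ≤ k := Nat.cast_nonneg k
    linarith
  have htpos : (0 : ℝ) < t ^ (-(5 : ℝ) / 2) := rpow_pos_of_pos ht0 _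
  rw [hcast, hsplit, hIp, hc2]
  rw [add_sub_cancel_left]
  calc ‖∫ w : ℝ, ((E w : ℝ) : ℂ) * g w‖
      ≤ ∫ w : ℝ, ‖((E w : ℝ) : ℂ) * g w‖ := norm_integral_le_integral_norm _
    _ ≤ ∫ w : ℝ, M₄ * 2 ^ k * (w ^ 4 * E w + w ^ (2 * k + 4) * E w) :=
        integral_mono intG.norm intD hgd
    _ = M₄ * 2 ^ k * ((∫ w : ℝ, w ^ 4 * E w) + ∫ w : ℝ, w ^ (2 * k + 4) * E w) := by
        rw [integral_const_mul, integral_add (my_integrable_pow 4 ht0)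
          (my_integrable_pow (2 * k + 4) ht0)]
    _ = M₄ * 2 ^ k * (Real.Gamma ((2 * (2 : ℝ) + 1) / 2) * t ^ (-(5 : ℝ) / 2)
        + Real.Gamma ((2 * ((k : ℝ) + 2) + 1) / 2) * t ^ (-(2 * ((k : ℝ) + 2) + 1) / 2)) := by
        rw [m4, mk, hexp4]
    _ ≤ M₄ * 2 ^ k * (Real.Gamma ((2 * (2 : ℝ) + 1) / 2) * t ^ (-(5 : ℝ) / 2)
        + Real.Gamma ((2 * ((k : ℝ) + 2) + 1) / 2) * t ^ (-(5 : ℝ) / 2)) := by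
        gcongr
    _ = 2 ^ k * (Real.Gamma ((2 * (2 : ℝ) + 1) / 2)
        + Real.Gamma ((2 * ((k : ℝ) + 2) + 1) / 2)) * M₄ * t ^ (-(5 : ℝ) / 2) := by ring
end

section
/- Let g : ℂ → ℂ be entire, let c ∈ ℝ, and suppose there exist constants A > 0 and N ∈ ℕ such that |g(z)| ≤ A (1 + |z|)^N for all z ∈ ℂ with |Im z| ≤ |c|. Then for every t > 0 and every r ∈ ℝ, ∫_ℝ e^{-t λ² − i λ r} g(λ) dλ = ∫_ℝ e^{-t (w + i c)² − i (w + i c) r} g(w + i c) dw. In particular, taking c = −r/(2t), ∫_ℝ e^{-t λ² − i λ r} g(λ) dλ = e^{-r²/(4t)} ∫_ℝ e^{-t w²} g(w − i r/(2t)) dw. -/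
open MeasureTheory Real

open Filter intervalIntegral Asymptotics Topology


lemma pow_one_add_abs_le (x : ℝ) (N : ℕ) : (1 + |x|) ^ N ≤ 2 ^ N * (1 + |x| ^ N) := by
  rcases le_or_gt |x| 1 with h | h
  · calc (1 + |x|) ^ N ≤ 2 ^ N := by
          apply pow_le_pow_left₀ (by positivity); linarith
      _ ≤ 2 ^ N * (1 + |x| ^ N) := by
          nlinarith [pow_pos (show (0:ℝ) < 2 by norm_num) N, pow_nonneg (abs_nonneg x) N]
  · calc (1 + |x|) ^ N ≤ (2 * |x|) ^ N := by
          apply pow_le_pow_left₀ (by positivity); linarith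
      _ = 2 ^ N * |x| ^ N := mul_pow _ _ _
      _ ≤ 2 ^ N * (1 + |x| ^ N) := by
          nlinarith [pow_pos (show (0:ℝ) < 2 by norm_num) N]

lemma abs_pow_mul_exp_integrable {b : ℝ} (hb : 0 < b) (N : ℕ) :
    Integrable fun x : ℝ => |x| ^ N * Real.exp (-b * x ^ 2) := by
  have h := (integrable_rpow_mul_exp_neg_mul_sq hb
    (s := (N : ℝ)) (lt_of_lt_of_le neg_one_lt_zero (Nat.cast_nonneg N))).abs
  refine h.congr ?_
  filter_upwards with x
  rw [Real.rpow_natCast, abs_mul, abs_pow, Real.abs_exp]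

lemma int_aux {b : ℝ} (hb : 0 < b) (D : ℝ) (hD : 0 ≤ D) (N : ℕ) :
    Integrable fun x : ℝ => (D + |x|) ^ N * Real.exp (-b * x ^ 2) := by
  have h1 : Integrable fun x : ℝ => Real.exp (-b * x ^ 2) := integrable_exp_neg_mul_sq hb
  have h2 := abs_pow_mul_exp_integrable hb N
  refine ((h1.const_mul ((D+1)^N * 2^N)).add (h2.const_mul ((D+1)^N * 2^N))).mono' ?_ ?_
  · exact (((continuous_const.add continuous_abs).pow N).mul
      (Real.continuous_exp.comp (continuous_const.mul (continuous_pow 2)))).aestronglyMeasurable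
  · filter_upwards with x
    have he : 0 < Real.exp (-b * x ^ 2) := Real.exp_pos _
    have h3 : (D + |x|) ^ N ≤ (D+1)^N * (1 + |x|) ^ N := by
      rw [← mul_pow]
      apply pow_le_pow_left₀ (by positivity)
      nlinarith [abs_nonneg x]
    have h4 := pow_one_add_abs_le x N
    have h5 : (D + |x|) ^ N ≤ (D+1)^N * 2^N * (1 + |x| ^ N) := by
      calc (D + |x|) ^ N ≤ (D+1)^N * (1 + |x|) ^ N := h3
        _ ≤ (D+1)^N * (2 ^ N * (1 + |x| ^ N)) := by
            apply mul_le_mul_of_nonneg_left h4 (by positivity)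
        _ = (D+1)^N * 2^N * (1 + |x| ^ N) := by ring
    rw [Real.norm_eq_abs, abs_mul, abs_of_nonneg he.le, abs_of_nonneg (by positivity)]
    calc (D + |x|) ^ N * Real.exp (-b * x ^ 2)
        ≤ ((D+1)^N * 2^N * (1 + |x| ^ N)) * Real.exp (-b * x ^ 2) := by
          exact mul_le_mul_of_nonneg_right h5 he.le
      _ = (D+1)^N * 2^N * Real.exp (-b * x ^ 2)
          + (D+1)^N * 2^N * (|x| ^ N * Real.exp (-b * x ^ 2)) := by ring

lemma pow_mul_exp_tendsto {b : ℝ} (hb : 0 < b) (N : ℕ) :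
    Tendsto (fun x : ℝ => x ^ N * Real.exp (-b * x ^ 2)) atTop (𝓝 0) := by
  have h := rpow_mul_exp_neg_mul_sq_isLittleO_exp_neg hb (N : ℝ)
  have hexp : Tendsto (fun x : ℝ => Real.exp (-(1/2) * x)) atTop (𝓝 0) := by
    have := Real.tendsto_exp_neg_atTop_nhds_zero.comp
      ((tendsto_const_mul_atTop_of_pos (show (0:ℝ) < 1/2 by norm_num)).mpr tendsto_id)
    refine this.congr fun x => ?_
    simp [Function.comp, neg_mul]
  have := h.tendsto_zero_of_tendsto hexp
  refine this.congr fun x => ?_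
  rw [Real.rpow_natCast]

lemma norm_integrand (t r x y : ℝ) :
    ‖Complex.exp (-(t : ℂ) * ((x:ℂ) + (y:ℂ) * Complex.I) ^ 2
        - Complex.I * ((x:ℂ) + (y:ℂ) * Complex.I) * (r:ℂ))‖
      = Real.exp (-t * x ^ 2 + t * y ^ 2 + r * y) := by
  rw [Complex.norm_exp]
  congr 1
  simp [Complex.sub_re, Complex.mul_re, Complex.mul_im, Complex.add_re, Complex.add_im,
    Complex.I_re, Complex.I_im, Complex.ofReal_re, Complex.ofReal_im, pow_two]
  ring

lemma contour_shift (g : ℂ → ℂ) (hg : Differentiable ℂ g) (c : ℝ)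
    (A : ℝ) (hA : 0 < A) (N : ℕ)
    (hbound : ∀ z : ℂ, |z.im| ≤ |c| → ‖g z‖ ≤ A * (1 + ‖z‖) ^ N)
    (t : ℝ) (ht : 0 < t) (r : ℝ) :
    (∫ l : ℝ, Complex.exp (-(t : ℂ) * (l : ℂ) ^ 2 - Complex.I * (l : ℂ) * (r : ℂ)) * g l) =
      ∫ w : ℝ, Complex.exp (-(t : ℂ) * ((w : ℂ) + (c : ℂ) * Complex.I) ^ 2
          - Complex.I * ((w : ℂ) + (c : ℂ) * Complex.I) * (r : ℂ)) *
        g ((w : ℂ) + (c : ℂ) * Complex.I) := by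
  set f : ℂ → ℂ := fun z => Complex.exp (-(t : ℂ) * z ^ 2 - Complex.I * z * (r:ℂ)) * g z with hf
  set K : ℝ := A * Real.exp (t * c ^ 2 + |r| * |c|) with hK
  have hKpos : 0 < K := by positivity
  have hfdiff : Differentiable ℂ f :=
    ((((differentiable_const _).mul (differentiable_pow 2)).sub
      (((differentiable_const _).mul differentiable_id).mul (differentiable_const _))).cexp).mul hg
  -- strip bound
  have hstrip : ∀ x y : ℝ, |y| ≤ |c| →
      ‖f ((x:ℂ) + (y:ℂ) * Complex.I)‖ ≤ K * (((1 + |c|) + |x|) ^ N * Real.exp (-t * x ^ 2)) := by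
    intro x y hy
    rw [hf]
    simp only [norm_mul]
    rw [norm_integrand]
    have him : ((x:ℂ) + (y:ℂ) * Complex.I).im = y := by simp
    have hgz : ‖g ((x:ℂ) + (y:ℂ) * Complex.I)‖ ≤ A * ((1 + |c|) + |x|) ^ N := by
      refine (hbound _ (by rw [him]; exact hy)).trans ?_
      have hz : ‖(x:ℂ) + (y:ℂ) * Complex.I‖ ≤ |x| + |y| := by
        refine (norm_add_le _ _).trans ?_
        simp [Complex.norm_real]
      exact mul_le_mul_of_nonneg_left
        (pow_le_pow_left₀ (by positivity) (by linarith [hz, hy]) N) hA.le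
    have hexp : Real.exp (-t * x ^ 2 + t * y ^ 2 + r * y)
        ≤ Real.exp (t * c ^ 2 + |r| * |c|) * Real.exp (-t * x ^ 2) := by
      rw [← Real.exp_add]
      apply Real.exp_le_exp.2
      have h1 : t * y ^ 2 ≤ t * c ^ 2 := by
        apply mul_le_mul_of_nonneg_left _ ht.le
        rw [← sq_abs y, ← sq_abs c]
        exact pow_le_pow_left₀ (abs_nonneg _) hy 2
      have h2 : r * y ≤ |r| * |c| := by
        calc r * y ≤ |r * y| := le_abs_self _
          _ = |r| * |y| := abs_mul _ _
          _ ≤ |r| * |c| := mul_le_mul_of_nonneg_left hy (abs_nonneg _)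
      linarith
    calc Real.exp (-t * x ^ 2 + t * y ^ 2 + r * y) * ‖g ((x:ℂ) + (y:ℂ) * Complex.I)‖
        ≤ (Real.exp (t * c ^ 2 + |r| * |c|) * Real.exp (-t * x ^ 2))
            * (A * ((1 + |c|) + |x|) ^ N) := by
          apply mul_le_mul hexp hgz (norm_nonneg _) (by positivity)
      _ = K * (((1 + |c|) + |x|) ^ N * Real.exp (-t * x ^ 2)) := by rw [hK]; ring
  -- integrability on horizontal lines
  have hint : ∀ y : ℝ, |y| ≤ |c| → Integrable fun x : ℝ => f ((x:ℂ) + (y:ℂ) * Complex.I) := by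
    intro y hy
    refine Integrable.mono' (((int_aux ht (1 + |c|) (by positivity) N).const_mul K)) ?_ ?_
    · exact (hfdiff.continuous.comp
        (Complex.continuous_ofReal.add continuous_const)).aestronglyMeasurable
    · filter_upwards with x
      exact hstrip x y hy
  have hf0 : Integrable fun x : ℝ => f x := by
    have := hint 0 (by simp)
    simpa using this
  have hfc : Integrable fun x : ℝ => f ((x:ℂ) + (c:ℂ) * Complex.I) := hint c le_rfl
  -- rectangle identity
  set v : ℝ → ℂ := fun T =>
    (Complex.I • ∫ y in (0:ℝ)..c, f ((T:ℂ) + (y:ℂ) * Complex.I)) -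
      Complex.I • ∫ y in (0:ℝ)..c, f (-(T:ℂ) + (y:ℂ) * Complex.I) with hv
  have C : ∀ T : ℝ, (∫ x in -T..T, f ((x:ℂ) + (c:ℂ) * Complex.I)) =
      (∫ x in -T..T, f (x:ℂ)) + v T := by
    intro T
    have H := Complex.integral_boundary_rect_eq_zero_of_differentiableOn f (-(T:ℂ))
      ((T:ℂ) + (c:ℂ) * Complex.I) (hfdiff.differentiableOn)
    simp only [Complex.neg_im, Complex.ofReal_im, neg_zero, Complex.ofReal_zero, zero_mul,
      add_zero, Complex.neg_re, Complex.ofReal_re, Complex.add_re, Complex.mul_re,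
      Complex.I_re, mul_zero, Complex.I_im, tsub_zero, Complex.add_im, Complex.mul_im,
      mul_one, zero_add, Complex.ofReal_neg] at H
    rw [hv]
    rw [sub_eq_zero] at H
    simp only [smul_eq_mul] at H ⊢
    linear_combination -H
  -- vertical integral tends to zero
  have hvt : Filter.Tendsto v Filter.atTop (nhds 0) := by
    rw [tendsto_zero_iff_norm_tendsto_zero]
    have hb : ∀ᶠ T in Filter.atTop,
        ‖v T‖ ≤ (2 * |c| * K * 2 ^ N) * (T ^ N * Real.exp (-t * T ^ 2)) := by
      filter_upwards [Filter.eventually_ge_atTop (1 + |c|)] with T hT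
      have hT0 : (0:ℝ) ≤ T := le_trans (by positivity) hT
      have habs : ∀ y : ℝ, y ∈ Set.uIoc (0:ℝ) c → |y| ≤ |c| := by
        intro y hy
        rcases le_or_gt 0 c with h | h
        · rw [Set.uIoc_of_le h] at hy
          rw [abs_of_nonneg h, abs_of_pos hy.1]; exact hy.2
        · rw [Set.uIoc_of_ge h.le] at hy
          rw [abs_of_neg h, abs_of_nonpos hy.2, neg_le_neg_iff]; exact hy.1.le
      have hCb : (0:ℝ) ≤ K * (((1 + |c|) + T) ^ N * Real.exp (-t * T ^ 2)) := by positivity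
      have h1 : ‖∫ y in (0:ℝ)..c, f ((T:ℂ) + (y:ℂ) * Complex.I)‖ ≤
          K * (((1 + |c|) + T) ^ N * Real.exp (-t * T ^ 2)) * |c - 0| := by
        apply intervalIntegral.norm_integral_le_of_norm_le_const
        intro y hy
        have := hstrip T y (habs y hy)
        rwa [abs_of_nonneg hT0] at this
      have h2 : ‖∫ y in (0:ℝ)..c, f (-(T:ℂ) + (y:ℂ) * Complex.I)‖ ≤
          K * (((1 + |c|) + T) ^ N * Real.exp (-t * T ^ 2)) * |c - 0| := by
        apply intervalIntegral.norm_integral_le_of_norm_le_const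
        intro y hy
        have := hstrip (-T) y (habs y hy)
        rw [abs_neg, abs_of_nonneg hT0, neg_sq] at this
        rwa [Complex.ofReal_neg] at this
      have hvn : ‖v T‖ ≤ 2 * (K * (((1 + |c|) + T) ^ N * Real.exp (-t * T ^ 2)) * |c|) := by
        rw [hv]
        refine (norm_sub_le _ _).trans ?_
        rw [norm_smul, norm_smul, Complex.norm_I, one_mul, one_mul]
        have := add_le_add h1 h2
        rw [sub_zero] at this
        linarith
      refine hvn.trans ?_
      have hpow : ((1 + |c|) + T) ^ N ≤ 2 ^ N * T ^ N := by
        rw [← mul_pow]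
        exact pow_le_pow_left₀ (by positivity) (by linarith) N
      have he : (0:ℝ) < Real.exp (-t * T ^ 2) := Real.exp_pos _
      calc 2 * (K * (((1 + |c|) + T) ^ N * Real.exp (-t * T ^ 2)) * |c|)
          ≤ 2 * (K * ((2 ^ N * T ^ N) * Real.exp (-t * T ^ 2)) * |c|) := by
            gcongr
        _ = (2 * |c| * K * 2 ^ N) * (T ^ N * Real.exp (-t * T ^ 2)) := by ring
    refine squeeze_zero' (Filter.Eventually.of_forall fun T => norm_nonneg _) hb ?_
    simpa using (pow_mul_exp_tendsto ht N).const_mul (2 * |c| * K * 2 ^ N)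
  -- take limits
  have h1' : Filter.Tendsto (fun T : ℝ => ∫ x in -T..T, f (x:ℂ)) Filter.atTop
      (nhds (∫ x : ℝ, f (x:ℂ))) :=
    intervalIntegral_tendsto_integral hf0 tendsto_neg_atTop_atBot Filter.tendsto_id
  have h2' : Filter.Tendsto (fun T : ℝ => ∫ x in -T..T, f ((x:ℂ) + (c:ℂ) * Complex.I))
      Filter.atTop (nhds (∫ x : ℝ, f ((x:ℂ) + (c:ℂ) * Complex.I))) :=
    intervalIntegral_tendsto_integral hfc tendsto_neg_atTop_atBot Filter.tendsto_id
  have h3 : Filter.Tendsto (fun T : ℝ => ∫ x in -T..T, f ((x:ℂ) + (c:ℂ) * Complex.I))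
      Filter.atTop (nhds ((∫ x : ℝ, f (x:ℂ)) + 0)) := by
    refine Filter.Tendsto.congr (fun T => (C T).symm) (h1'.add hvt)
  have := tendsto_nhds_unique h3 h2'
  rw [add_zero] at this
  exact this

/-- Contour-shift (steepest descent) identity for Gaussian-weighted integrals of entire
functions with polynomial growth in the horizontal strip `|Im z| ≤ |c|`:
`∫_ℝ e^{-tλ² − iλr} g(λ) dλ = ∫_ℝ e^{-t(w+ic)² − i(w+ic)r} g(w+ic) dw`,
and in particular, taking `c = −r/(2t)`,
`∫_ℝ e^{-tλ² − iλr} g(λ) dλ = e^{-r²/(4t)} ∫_ℝ e^{-tw²} g(w − ir/(2t)) dw`. -/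
theorem stmt_2 (g : ℂ → ℂ) (hg : Differentiable ℂ g) (c : ℝ)
    (A : ℝ) (hA : 0 < A) (N : ℕ)
    (hbound : ∀ z : ℂ, |z.im| ≤ |c| → ‖g z‖ ≤ A * (1 + ‖z‖) ^ N) :
    ∀ t : ℝ, 0 < t → ∀ r : ℝ,
      ((∫ l : ℝ, Complex.exp (-(t : ℂ) * (l : ℂ) ^ 2 - Complex.I * (l : ℂ) * (r : ℂ)) * g l) =
        ∫ w : ℝ, Complex.exp (-(t : ℂ) * ((w : ℂ) + (c : ℂ) * Complex.I) ^ 2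
            - Complex.I * ((w : ℂ) + (c : ℂ) * Complex.I) * (r : ℂ)) *
          g ((w : ℂ) + (c : ℂ) * Complex.I)) ∧
      (c = -r / (2 * t) →
        (∫ l : ℝ, Complex.exp (-(t : ℂ) * (l : ℂ) ^ 2 - Complex.I * (l : ℂ) * (r : ℂ)) * g l) =
          Complex.exp (-(r : ℂ) ^ 2 / (4 * (t : ℂ))) *
            ∫ w : ℝ, Complex.exp (-(t : ℂ) * (w : ℂ) ^ 2) *
              g ((w : ℂ) - Complex.I * ((r : ℂ) / (2 * (t : ℂ))))) := by
  intro t ht r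
  have key := contour_shift g hg c A hA N hbound t ht r
  refine ⟨key, fun hc => ?_⟩
  rw [key]
  have ht' : (t : ℂ) ≠ 0 := by exact_mod_cast ht.ne'
  have hcast : (c : ℂ) = -((r : ℂ) / (2 * (t : ℂ))) := by
    rw [hc]; push_cast; ring
  have hpt : ∀ w : ℝ,
      Complex.exp (-(t : ℂ) * ((w : ℂ) + (c : ℂ) * Complex.I) ^ 2
          - Complex.I * ((w : ℂ) + (c : ℂ) * Complex.I) * (r : ℂ)) *
        g ((w : ℂ) + (c : ℂ) * Complex.I)
      = Complex.exp (-(r : ℂ) ^ 2 / (4 * (t : ℂ))) *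
          (Complex.exp (-(t : ℂ) * (w : ℂ) ^ 2) *
            g ((w : ℂ) - Complex.I * ((r : ℂ) / (2 * (t : ℂ))))) := by
    intro w
    have harg : (w : ℂ) + (c : ℂ) * Complex.I
        = (w : ℂ) - Complex.I * ((r : ℂ) / (2 * (t : ℂ))) := by
      rw [hcast]; ring
    have hexp : -(t : ℂ) * ((w : ℂ) + (c : ℂ) * Complex.I) ^ 2
        - Complex.I * ((w : ℂ) + (c : ℂ) * Complex.I) * (r : ℂ)
        = -(r : ℂ) ^ 2 / (4 * (t : ℂ)) + (-(t : ℂ) * (w : ℂ) ^ 2) := by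
      rw [hcast]
      field_simp
      ring_nf
      rw [Complex.I_sq]
      ring
    rw [hexp, harg, Complex.exp_add, mul_assoc]
  simp_rw [hpt]
  rw [MeasureTheory.integral_const_mul]
end
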